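/- Comparison of the q-mean with the arithmetic mean: for every q > 1 and all a, b > 0 with a ≠ b, | (a+b)/2 − θ_q(a,b) | ≤ (|q−2|/q) · |a−b|/2, where θ_q(a,b) := ((q−1)/q) (a^q − b^q)/(a^{q−1} − b^{q−1}). -/

import Mathlib

lemma amgm1 {q t : ℝ} (hq : 2 ≤ q) (ht : 0 < t) :
    (q - 1) * t ≤ t ^ (q - 1) + (q - 2) := by
  have hq1 : (0:ℝ) < q - 1 := by linarith
  have h := Real.geom_mean_le_arith_mean2_weighted
    (w₁ := 1/(q-1)) (w₂ := (q-2)/(q-1)) (p₁ := t ^ (q-1)) (p₂ := 1)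
    (by positivity) (div_nonneg (by linarith) (by linarith)) (by positivity) one_pos.le
    (by field_simp; linarith)
  have key : (t ^ (q-1)) ^ (1/(q-1)) = t := by
    rw [← Real.rpow_mul ht.le, mul_one_div, div_self (ne_of_gt hq1), Real.rpow_one]
  rw [key, Real.one_rpow, mul_one, mul_one] at h
  have h2 := mul_le_mul_of_nonneg_left h hq1.le
  calc (q-1)*t ≤ (q-1) * (1/(q-1) * t^(q-1) + (q-2)/(q-1)) := h2
    _ = t^(q-1) + (q-2) := by field_simp

lemma amgm2 {q t : ℝ} (hq1 : 1 < q) (hq : q ≤ 2) (ht : 0 < t) :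
    t ^ (q - 1) ≤ (q - 1) * t + (2 - q) := by
  have h := Real.geom_mean_le_arith_mean2_weighted
    (w₁ := q-1) (w₂ := 2-q) (p₁ := t) (p₂ := 1)
    (by linarith) (by linarith) ht.le one_pos.le (by ring)
  rw [Real.one_rpow, mul_one, mul_one] at h
  exact h

lemma main_case (q a b : ℝ) (hq : 1 < q) (ha : 0 < a) (hb : 0 < b) (hba : b < a) :
    |(a + b)/2 - (q - 1)/q * (a ^ q - b ^ q) / (a ^ (q - 1) - b ^ (q - 1))| ≤
      |q - 2|/q * (|a - b|/2) := by
  have hq0 : (0:ℝ) < q := by linarith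
  have hD : b ^ (q-1) < a ^ (q-1) := Real.rpow_lt_rpow hb.le hba (by linarith)
  have hDpos : (0:ℝ) < a ^ (q-1) - b ^ (q-1) := by linarith
  have haq : a ^ q = a * a ^ (q-1) := by
    nth_rewrite 1 [show q = 1 + (q-1) by ring]
    rw [Real.rpow_add ha, Real.rpow_one]
  have hbq : b ^ q = b * b ^ (q-1) := by
    nth_rewrite 1 [show q = 1 + (q-1) by ring]
    rw [Real.rpow_add hb, Real.rpow_one]
  have hBA : (b/a) ^ (q-1) * a ^ (q-1) = b ^ (q-1) := by
    rw [Real.div_rpow hb.le ha.le, div_mul_cancel₀]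
    positivity
  have hAB : (a/b) ^ (q-1) * b ^ (q-1) = a ^ (q-1) := by
    rw [Real.div_rpow ha.le hb.le, div_mul_cancel₀]
    positivity
  -- key polynomial inequality
  have key : |q*(a+b)*(a^(q-1) - b^(q-1)) - 2*(q-1)*(a^q - b^q)| ≤
      |q - 2| * ((a-b)*(a^(q-1) - b^(q-1))) := by
    rcases le_total 2 q with h2 | h2
    · rw [show |q-2| = q-2 from abs_of_nonneg (by linarith), abs_le]
      constructor
      · -- lower bound: needs (q-1)*a*B1 ≤ b*A1 + (q-2)*b*B1
        have h1 := amgm1 h2 (div_pos ha hb)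
        have h3 := mul_le_mul_of_nonneg_right h1 (le_of_lt (by positivity : (0:ℝ) < b * b^(q-1)))
        rw [show (q-1)*(a/b) * (b * b^(q-1)) = (q-1)*a*b^(q-1) by field_simp] at h3
        rw [show ((a/b)^(q-1) + (q-2)) * (b * b^(q-1)) = b * ((a/b)^(q-1)*b^(q-1)) + (q-2)*b*b^(q-1) by ring, hAB] at h3
        nlinarith [h3]
      · -- upper bound: needs (q-1)*b*A1 ≤ a*B1 + (q-2)*a*A1
        have h1 := amgm1 h2 (div_pos hb ha)
        have h3 := mul_le_mul_of_nonneg_right h1 (le_of_lt (by positivity : (0:ℝ) < a * a^(q-1)))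
        rw [show (q-1)*(b/a) * (a * a^(q-1)) = (q-1)*b*a^(q-1) by field_simp] at h3
        rw [show ((b/a)^(q-1) + (q-2)) * (a * a^(q-1)) = a * ((b/a)^(q-1)*a^(q-1)) + (q-2)*a*a^(q-1) by ring, hBA] at h3
        nlinarith [h3]
    · rw [show |q-2| = -(q-2) from abs_of_nonpos (by linarith), abs_le]
      constructor
      · -- lower: a*B1 ≤ (2-q)*a*A1 + (q-1)*b*A1
        have h1 := amgm2 hq h2 (div_pos hb ha)
        have h3 := mul_le_mul_of_nonneg_right h1 (le_of_lt (by positivity : (0:ℝ) < a * a^(q-1)))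
        rw [show (b/a)^(q-1) * (a * a^(q-1)) = a * ((b/a)^(q-1)*a^(q-1)) by ring, hBA] at h3
        rw [show ((q-1)*(b/a) + (2-q)) * (a * a^(q-1)) = (q-1)*b*a^(q-1) + (2-q)*a*a^(q-1) by field_simp] at h3
        nlinarith [h3]
      · -- upper: b*A1 ≤ (q-1)*a*B1 + (2-q)*b*B1
        have h1 := amgm2 hq h2 (div_pos ha hb)
        have h3 := mul_le_mul_of_nonneg_right h1 (le_of_lt (by positivity : (0:ℝ) < b * b^(q-1)))
        rw [show (a/b)^(q-1) * (b * b^(q-1)) = b * ((a/b)^(q-1)*b^(q-1)) by ring, hAB] at h3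
        rw [show ((q-1)*(a/b) + (2-q)) * (b * b^(q-1)) = (q-1)*a*b^(q-1) + (2-q)*b*b^(q-1) by field_simp] at h3
        nlinarith [h3]
  have heq : (a + b)/2 - (q - 1)/q * (a ^ q - b ^ q) / (a ^ (q - 1) - b ^ (q - 1)) =
      (q*(a+b)*(a^(q-1) - b^(q-1)) - 2*(q-1)*(a^q - b^q)) / (2*q*(a^(q-1) - b^(q-1))) := by
    field_simp
  have hreq : |q - 2|/q * (|a - b|/2) =
      (|q - 2| * ((a-b)*(a^(q-1) - b^(q-1)))) / (2*q*(a^(q-1) - b^(q-1))) := by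
    rw [abs_of_pos (by linarith : (0:ℝ) < a - b)]
    field_simp
  rw [heq, hreq, abs_div, abs_of_pos (by positivity : (0:ℝ) < 2*q*(a^(q-1)-b^(q-1)))]
  exact div_le_div_of_nonneg_right key (by positivity) |>.trans_eq rfl


/-- **Comparison of the `q`-mean with the arithmetic mean.**
For `q > 1` and distinct positive reals `a ≠ b`,
`|(a+b)/2 − θ_q(a,b)| ≤ (|q−2|/q) |a−b|/2`, where
`θ_q(a,b) := ((q−1)/q) (a^q − b^q)/(a^{q−1} − b^{q−1})`. -/
theorem qMean_arith_mean_comparison (q a b : ℝ) (hq : 1 < q) (ha : 0 < a) (hb : 0 < b)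
    (hab : a ≠ b) :
    |(a + b)/2 - (q - 1)/q * (a ^ q - b ^ q) / (a ^ (q - 1) - b ^ (q - 1))| ≤
      |q - 2|/q * (|a - b|/2) := by
  rcases hab.lt_or_gt with h | h
  · have := main_case q b a hq hb ha h
    have e1 : (b + a)/2 - (q - 1)/q * (b ^ q - a ^ q) / (b ^ (q - 1) - a ^ (q - 1)) =
        (a + b)/2 - (q - 1)/q * (a ^ q - b ^ q) / (a ^ (q - 1) - b ^ (q - 1)) := by
      rw [show (q-1)/q * (b^q - a^q) = -((q-1)/q * (a^q - b^q)) by ring,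
        show b^(q-1) - a^(q-1) = -(a^(q-1) - b^(q-1)) by ring, neg_div_neg_eq]
      ring
    rw [e1, abs_sub_comm b a] at this
    exact this
  · exact main_case q a b hq ha hb h
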